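/- Let h ≥ 1 divide q and all values r(1),...,r(p-1), with gcd(p,q) = 1. Define r⋆ : {1,...,p-1} → ℤ by r⋆(j·h^{-1} mod p) = r(j)/h (well-defined since h is invertible mod p). Let C and C⋆ be the generalized Collatz maps with data (p,q,r) and (p,q,r⋆) respectively. Then C(hN) = h·C⋆(N) for all N ∈ ℕ; in particular C^k(hN) = h·(C⋆)^k(N) for all k ≥ 0. -/
import Mathlib

lemma stmt16_aux_mod {a b : ℕ} (hd : b ∣ a) : a % b = 0 := by
  obtain ⟨c, rfl⟩ := hd
  simp [Nat.mul_mod_right]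

/-- The conjugation identity: if `h` divides `q` and all values `r(j)`, and `r⋆` is
defined by `r⋆(j h⁻¹ mod p) = r(j)/h`, then `C(hN) = h C⋆(N)` and hence
`C^k(hN) = h (C⋆)^k(N)` for all `k`. -/
theorem stmt16 (p q h : ℕ) (hp : 2 ≤ p) (hq : 2 ≤ q) (hh : 1 ≤ h)
    (hpq : Nat.Coprime p q) (hhq : h ∣ q)
    (r rstar : ℕ → ℤ)
    (hr : ∀ j, 1 ≤ j → j < p → 1 ≤ q * j + r j)
    (hhr : ∀ j, 1 ≤ j → j < p → (h : ℤ) ∣ r j)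
    (h' : ℕ) (hh' : h * h' % p = 1)
    (hrstar : ∀ j, 1 ≤ j → j < p → rstar (j * h' % p) = r j / h)
    (C Cstar : ℕ → ℕ)
    (hC : ∀ N, C N = if N % p = 0 then N / p else ((q * N : ℤ) + r (N % p)).toNat)
    (hCstar : ∀ N, Cstar N = if N % p = 0 then N / p else ((q * N : ℤ) + rstar (N % p)).toNat) :
    ∀ N, 1 ≤ N → (C (h * N) = h * Cstar N ∧ ∀ k, C^[k] (h * N) = h * Cstar^[k] N) := by
  have hp' : 0 < p := by omega
  have hcop : Nat.Coprime h p := by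
    have h1 : Nat.gcd h p ∣ h * h' := Dvd.dvd.mul_right (Nat.gcd_dvd_left h p) h'
    have h2 : Nat.gcd h p ∣ p * (h * h' / p) := Dvd.dvd.mul_right (Nat.gcd_dvd_right h p) _
    have e : h * h' - p * (h * h' / p) = 1 := by
      have := Nat.div_add_mod (h * h') p
      omega
    have := Nat.dvd_sub h1 h2
    rw [e] at this
    exact Nat.dvd_one.mp this
  have key : ∀ N, 1 ≤ N → C (h * N) = h * Cstar N ∧ 1 ≤ Cstar N := by
    intro N hN
    by_cases h0 : N % p = 0
    · have hpdvd : p ∣ N := Nat.dvd_of_mod_eq_zero h0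
      have h0' : (h * N) % p = 0 := stmt16_aux_mod (hpdvd.mul_left h)
      rw [hC, hCstar, if_pos h0', if_pos h0]
      refine ⟨Nat.mul_div_assoc h hpdvd, ?_⟩
      have hpN : p ≤ N := Nat.le_of_dvd (by omega) hpdvd
      exact (Nat.one_le_div_iff hp').mpr hpN
    · set j := h * N % p with hj
      have hjp : j < p := Nat.mod_lt _ hp'
      have hj1 : 1 ≤ j := by
        rcases Nat.eq_zero_or_pos j with hz | hz
        · exfalso
          have hd : p ∣ h * N := Nat.dvd_of_mod_eq_zero hz
          have : p ∣ N := Nat.Coprime.dvd_of_dvd_mul_left hcop.symm hd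
          exact h0 (stmt16_aux_mod this)
        · exact hz
      have hjh' : j * h' % p = N % p := by
        have e1 : j * h' % p = h * N * h' % p := by
          rw [hj, Nat.mod_mul_mod]
        rw [e1, show h * N * h' = N * (h * h') by ring, Nat.mul_mod, hh', mul_one,
          Nat.mod_mod_of_dvd _ dvd_rfl]
      have hrs : rstar (N % p) = r j / h := by rw [← hjh']; exact hrstar j hj1 hjp
      have hdv : (h : ℤ) ∣ r j := hhr j hj1 hjp
      obtain ⟨c, hc⟩ := hdv
      have hne : (h : ℤ) ≠ 0 := by exact_mod_cast (by omega : h ≠ 0)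
      have hdivc : r j / (h : ℤ) = c := by rw [hc, Int.mul_ediv_cancel_left c hne]
      have h0' : (h * N) % p ≠ 0 := by omega
      rw [hC, hCstar, if_neg h0', if_neg h0, hrs, hdivc]
      have hle : (j : ℤ) ≤ (h : ℤ) * N := by exact_mod_cast Nat.mod_le (h * N) p
      have hpos : 1 ≤ (q : ℤ) * (h * N) + r j := by
        have hr' := hr j hj1 hjp
        have hq0 : (1 : ℤ) ≤ q := by exact_mod_cast (by omega : 1 ≤ q)
        nlinarith
      have heq : (q : ℤ) * (h * N) + r j = (h : ℤ) * ((q : ℤ) * N + c) := by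
        rw [hc]; push_cast; ring
      set X : ℤ := (q : ℤ) * N + c with hX
      have hX1 : 1 ≤ X := by
        rw [heq] at hpos
        nlinarith [hpos, (by exact_mod_cast hh : (1:ℤ) ≤ h)]
      have hXnn : 0 ≤ X := by linarith
      have e2 : ((q : ℤ) * (↑(h * N)) + r j).toNat = h * X.toNat := by
        have c1 : (((q : ℤ) * (↑(h * N)) + r j).toNat : ℤ) = (q : ℤ) * (h * N) + r j := by
          push_cast
          rw [Int.toNat_of_nonneg (by push_cast; linarith)]
        have c2 : ((h * X.toNat : ℕ) : ℤ) = (h : ℤ) * X := by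
          push_cast
          rw [Int.toNat_of_nonneg hXnn]
        have : (((q : ℤ) * (↑(h * N)) + r j).toNat : ℤ) = ((h * X.toNat : ℕ) : ℤ) := by
          rw [c1, c2]
          push_cast at heq ⊢
          linarith [heq]
        exact_mod_cast this
      constructor
      · rw [e2]
      · omega
  intro N hN
  have iter : ∀ k N, 1 ≤ N → C^[k] (h * N) = h * Cstar^[k] N := by
    intro k
    induction k with
    | zero => intro N _; simp
    | succ k ih =>
      intro N hN
      rw [Function.iterate_succ_apply, Function.iterate_succ_apply,
        (key N hN).1, ih (Cstar N) (key N hN).2]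
  exact ⟨(key N hN).1, fun k => iter k N hN⟩
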